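/- Let F : ℝⁿ → ℝᵈ be a surjective linear map, where ℝⁿ is equipped with the ℓ¹-norm ‖·‖₁. Let K := F(B), where B := {u ∈ ℝⁿ : ‖u‖₁ ≤ 1}, and let ‖s‖_K denote the Minkowski gauge of K at s, i.e., inf{t > 0 : s ∈ t·K}. Then for every x ∈ ℝⁿ and every i ∈ ℕ, {r ∈ ℝᵈ : ‖F(x) − r‖_K < i + 1} = ∪_{y∈ℝⁿ : ‖x−y‖₁ ≤ i} {r ∈ ℝᵈ : ‖F(y) − r‖_K < 1}. (In the paper's terminology, the cumulative layer sets A_iˣ of the K-norm mechanism satisfy A_iˣ = ∪_{y : ‖x−y‖₁ ≤ i} A₀ʸ, so the K-norm mechanism is a basic mechanism.) -/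

import Mathlib

open Finset Pointwise

/-- The gauge of `F '' B₁` at `F w` is at most the `ℓ¹` norm of `w`. -/
theorem gauge_image_le {n d : ℕ} (F : (Fin n → ℝ) →ₗ[ℝ] (Fin d → ℝ)) (w : Fin n → ℝ) :
    gauge (F '' {u : Fin n → ℝ | ∑ j, |u j| ≤ 1}) (F w) ≤ ∑ j, |w j| := by
  set t := ∑ j, |w j| with ht
  have ht0 : 0 ≤ t := Finset.sum_nonneg fun j _ => abs_nonneg _
  rcases eq_or_lt_of_le ht0 with h0 | hpos
  · have hw : w = 0 := by
      funext j
      have := (Finset.sum_eq_zero_iff_of_nonneg (fun j _ => abs_nonneg (w j))).mp h0.symm j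
        (Finset.mem_univ j)
      simpa [abs_eq_zero] using this
    simp [hw, ← h0, gauge_zero]
  · apply gauge_le_of_mem ht0
    refine Set.mem_smul_set.mpr ⟨F (t⁻¹ • w), ⟨t⁻¹ • w, ?_, rfl⟩, ?_⟩
    · have h1 : ∑ j, |(t⁻¹ • w) j| = t⁻¹ * t := by
        simp only [Pi.smul_apply, smul_eq_mul, abs_mul, abs_of_pos (inv_pos.mpr hpos)]
        rw [← Finset.mul_sum]
      simp only [Set.mem_setOf_eq, h1, inv_mul_cancel₀ (ne_of_gt hpos), le_refl]
    · show t • F (t⁻¹ • w) = F w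
      rw [← map_smul, smul_smul, mul_inv_cancel₀ (ne_of_gt hpos), one_smul]

/-- If the gauge of `F '' B₁` at `s` is less than `c`, then `s = F w` for some `w`
with `ℓ¹` norm less than `c`. -/
theorem exists_of_gauge_lt {n d : ℕ} (F : (Fin n → ℝ) →ₗ[ℝ] (Fin d → ℝ))
    (hF : Function.Surjective F) (s : Fin d → ℝ) (c : ℝ)
    (h : gauge (F '' {u : Fin n → ℝ | ∑ j, |u j| ≤ 1}) s < c) :
    ∃ w : Fin n → ℝ, F w = s ∧ ∑ j, |w j| < c := by
  have hc0 : 0 < c := lt_of_le_of_lt (gauge_nonneg _) h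
  obtain ⟨u, hu⟩ := hF s
  have hu0 : 0 ≤ ∑ j, |u j| := Finset.sum_nonneg fun j _ => abs_nonneg _
  rcases eq_or_lt_of_le hu0 with h0 | hpos
  · have hw : u = 0 := by
      funext j
      have := (Finset.sum_eq_zero_iff_of_nonneg (fun j _ => abs_nonneg (u j))).mp h0.symm j
        (Finset.mem_univ j)
      simpa [abs_eq_zero] using this
    refine ⟨0, by simp [← hu, hw], by simpa using hc0⟩
  · rw [gauge_def] at h
    have hne : ({ r ∈ Set.Ioi (0 : ℝ) |
        s ∈ (r • (⇑F '' {u : Fin n → ℝ | ∑ j, |u j| ≤ 1}) : Set (Fin d → ℝ)) }).Nonempty := by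
      refine ⟨∑ j, |u j|, hpos, ?_⟩
      refine Set.mem_smul_set.mpr ⟨F ((∑ j, |u j|)⁻¹ • u), ⟨(∑ j, |u j|)⁻¹ • u, ?_, rfl⟩, ?_⟩
      · have h1 : ∑ j, |((∑ j, |u j|)⁻¹ • u) j| = (∑ j, |u j|)⁻¹ * ∑ j, |u j| := by
          simp only [Pi.smul_apply, smul_eq_mul, abs_mul, abs_of_pos (inv_pos.mpr hpos)]
          rw [← Finset.mul_sum]
        simp only [Set.mem_setOf_eq, h1, inv_mul_cancel₀ (ne_of_gt hpos), le_refl]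
      · show (∑ j, |u j|) • F ((∑ j, |u j|)⁻¹ • u) = s
        rw [← map_smul, smul_smul, mul_inv_cancel₀ (ne_of_gt hpos), one_smul, hu]
    obtain ⟨t, ⟨ht0, hts⟩, htc⟩ := exists_lt_of_csInf_lt hne h
    obtain ⟨k, ⟨v, hv, rfl⟩, hk⟩ := hts
    refine ⟨t • v, by rw [map_smul]; exact hk, ?_⟩
    have hvt : ∑ j, |(t • v) j| = t * ∑ j, |v j| := by
      simp only [Pi.smul_apply, smul_eq_mul, abs_mul, abs_of_pos (Set.mem_Ioi.mp ht0)]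
      rw [← Finset.mul_sum]
    calc ∑ j, |(t • v) j| = t * ∑ j, |v j| := hvt
      _ ≤ t * 1 := by
          exact mul_le_mul_of_nonneg_left hv (le_of_lt ht0)
      _ < c := by simpa using htc

/-- The K-norm mechanism is a basic mechanism: for a surjective linear map
`F : ℝⁿ → ℝᵈ` with `K = F(B₁ⁿ)` the image of the closed `ℓ¹` unit ball and
`‖·‖_K` the Minkowski gauge of `K`, the cumulative layer sets satisfy
`{r : ‖F x − r‖_K < i + 1} = ∪_{y : ‖x−y‖₁ ≤ i} {r : ‖F y − r‖_K < 1}`. -/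
theorem stmt_17 {n d : ℕ} (F : (Fin n → ℝ) →ₗ[ℝ] (Fin d → ℝ))
    (hF : Function.Surjective F) :
    ∀ (x : Fin n → ℝ) (i : ℕ),
      {r : Fin d → ℝ |
          gauge (F '' {u : Fin n → ℝ | ∑ j, |u j| ≤ 1}) (F x - r) < (i : ℝ) + 1} =
        ⋃ y ∈ {y : Fin n → ℝ | ∑ j, |x j - y j| ≤ (i : ℝ)},
          {r : Fin d → ℝ |
            gauge (F '' {u : Fin n → ℝ | ∑ j, |u j| ≤ 1}) (F y - r) < 1} := by
  intro x i
  ext r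
  simp only [Set.mem_setOf_eq, Set.mem_iUnion, exists_prop]
  constructor
  · intro h
    obtain ⟨w, hw, hwn⟩ := exists_of_gauge_lt F hF _ _ h
    by_cases hle : ∑ j, |w j| ≤ (i : ℝ)
    · refine ⟨x - w, ?_, ?_⟩
      · simpa using hle
      · have : F (x - w) - r = 0 := by
          rw [map_sub, hw]; abel
        rw [this, gauge_zero]; norm_num
    · push_neg at hle
      have hwpos : (0 : ℝ) < ∑ j, |w j| := lt_of_le_of_lt (Nat.cast_nonneg i) hle
      set c : ℝ := (i : ℝ) / (∑ j, |w j|) with hc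
      clear_value c
      have hc0 : 0 ≤ c := by
        rw [hc]; exact div_nonneg (Nat.cast_nonneg i) (le_of_lt hwpos)
      have hc1 : c ≤ 1 := by
        rw [hc, div_le_one hwpos]; exact le_of_lt hle
      refine ⟨x - c • w, ?_, ?_⟩
      · have : ∀ j, |x j - (x - c • w) j| = c * |w j| := by
          intro j
          simp [abs_mul, abs_of_nonneg hc0]
        simp only [Set.mem_setOf_eq, this]
        rw [← Finset.mul_sum, hc, div_mul_cancel₀ _ (ne_of_gt hwpos)]
      · have heq : F (x - c • w) - r = F ((1 - c) • w) := by
          have h2 : F ((1 - c) • w) = F w - c • F w := by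
            rw [map_smul, sub_smul, one_smul]
          rw [h2, map_sub, map_smul, hw]
          module
        rw [heq]
        refine lt_of_le_of_lt (gauge_image_le F _) ?_
        have : ∑ j, |((1 - c) • w) j| = (1 - c) * ∑ j, |w j| := by
          simp only [Pi.smul_apply, smul_eq_mul, abs_mul, abs_of_nonneg (by linarith : (0:ℝ) ≤ 1 - c)]
          rw [← Finset.mul_sum]
        rw [this, sub_mul, one_mul, hc, div_mul_cancel₀ _ (ne_of_gt hwpos)]
        linarith
  · rintro ⟨y, hy, hgauge⟩
    obtain ⟨w, hw, hwn⟩ := exists_of_gauge_lt F hF _ _ hgauge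
    have heq : F x - r = F ((x - y) + w) := by
      rw [map_add, map_sub, hw]; abel
    rw [heq]
    refine lt_of_le_of_lt (gauge_image_le F _) ?_
    calc ∑ j, |((x - y) + w) j| ≤ ∑ j, (|x j - y j| + |w j|) := by
          refine Finset.sum_le_sum fun j _ => ?_
          simpa using abs_add_le (x j - y j) (w j)
      _ = (∑ j, |x j - y j|) + ∑ j, |w j| := Finset.sum_add_distrib
      _ < (i : ℝ) + 1 := add_lt_add_of_le_of_lt hy hwn
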